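/- The number of walks of length n from (0,0) to (0,0) on D_2 satisfies, for the generating function F(t) = Σ_{n≥0} f(n) t^n (as a formal power series), the identity (1 - 4t³ - t⁶)·F(t) = 1 - 3t³. -/

import Mathlib

def Dedge (k : ℕ) (p q : ℕ × ℕ) : Prop :=
  p.1 + p.2 ≤ k ∧ q.1 + q.2 ≤ k ∧
    (q = (p.1, p.2 + 1) ∨ (q.1 + 1 = p.1 ∧ q.2 = p.2) ∨
      (q.1 = p.1 + 1 ∧ q.2 + 1 = p.2))

def Walk (k n : ℕ) (u v : ℕ × ℕ) : Type :=
  { f : Fin (n + 1) → ℕ × ℕ // f 0 = u ∧ f (Fin.last n) = v ∧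
      ∀ i : Fin n, Dedge k (f i.castSucc) (f i.succ) }

noncomputable def walkCount (k n : ℕ) (u v : ℕ × ℕ) : ℕ := Nat.card (Walk k n u v)

instance (k : ℕ) (p q : ℕ × ℕ) : Decidable (Dedge k p q) := by
  unfold Dedge; infer_instance

def succs (k : ℕ) (u : ℕ × ℕ) : Finset (ℕ × ℕ) :=
  (Finset.range (k+1) ×ˢ Finset.range (k+1)).filter (fun w => Dedge k u w)

lemma mem_succs {k : ℕ} {u w : ℕ × ℕ} : w ∈ succs k u ↔ Dedge k u w := by
  constructor
  · intro h; exact (Finset.mem_filter.1 h).2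
  · intro h
    obtain ⟨-, hw, -⟩ := id h
    refine Finset.mem_filter.2 ⟨Finset.mem_product.2 ⟨?_, ?_⟩, h⟩ <;>
      · rw [Finset.mem_range]; omega

lemma mySigmaExt {k n : ℕ} {u v : ℕ × ℕ} :
    ∀ {w w' : {w : ℕ × ℕ // Dedge k u w}} (a : Walk k n w.1 v) (b : Walk k n w'.1 v),
      w.1 = w'.1 → a.1 = b.1 →
      (⟨w, a⟩ : Σ w : {w : ℕ × ℕ // Dedge k u w}, Walk k n w.1 v) = ⟨w', b⟩ := by
  rintro ⟨w, hw⟩ ⟨w', hw'⟩ a b h1 h2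
  dsimp only at h1
  subst h1
  exact congrArg _ (Subtype.ext h2)

def walkSuccEquiv (k n : ℕ) (u v : ℕ × ℕ) :
    Walk k (n+1) u v ≃ Σ w : {w : ℕ × ℕ // Dedge k u w}, Walk k n w.1 v where
  toFun x :=
    ⟨⟨x.1 1, by
        have := x.2.2.2 0
        simpa [x.2.1] using this⟩,
     ⟨fun i => x.1 i.succ, by simp, by
        show x.1 (Fin.last n).succ = v
        rw [Fin.succ_last]; exact x.2.2.1, fun i => by
        have := x.2.2.2 i.succ
        exact this⟩⟩
  invFun x :=
    ⟨Fin.cases u x.2.1, by simp, by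
        rw [show Fin.last (n+1) = (Fin.last n).succ from (Fin.succ_last n).symm]
        exact x.2.2.2.1, by
        intro i
        induction i using Fin.cases with
        | zero =>
          simp only [Fin.castSucc_zero, Fin.cases_zero, Fin.cases_succ, x.2.2.1]
          exact x.1.2
        | succ j =>
          have := x.2.2.2.2 j
          exact this⟩
  left_inv x := by
    apply Subtype.ext
    funext i
    induction i using Fin.cases with
    | zero => simp [x.2.1]
    | succ j => simp
  right_inv := by
    rintro ⟨⟨w, hw⟩, g, hg0, hgl, hge⟩
    have h1 : (Fin.cases u g : Fin (n+1+1) → ℕ × ℕ) 1 = w := by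
      rw [show (1 : Fin (n+1+1)) = (0 : Fin (n+1)).succ from (Fin.succ_zero_eq_one).symm]
      simp only [Fin.cases_succ]
      exact hg0
    apply mySigmaExt _ _ h1
    funext i
    simp

lemma walk_finite (k : ℕ) : ∀ (n : ℕ) (u v : ℕ × ℕ), Finite (Walk k n u v) := by
  intro n
  induction n with
  | zero =>
    intro u v
    have : Subsingleton (Walk k 0 u v) := by
      constructor
      intro a b
      apply Subtype.ext
      funext i
      have hi : i = 0 := Fin.ext (by simpa using Nat.lt_one_iff.mp i.isLt)
      rw [hi, a.2.1, b.2.1]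
    exact Finite.of_subsingleton
  | succ n ih =>
    intro u v
    have hfin : Finite {w : ℕ × ℕ // Dedge k u w} := by
      have h : {w : ℕ × ℕ | Dedge k u w} ⊆ ↑(succs k u) := fun w hw => mem_succs.2 hw
      exact (Set.Finite.subset (succs k u).finite_toSet h).to_subtype
    have : ∀ w : {w : ℕ × ℕ // Dedge k u w}, Finite (Walk k n w.1 v) := fun w => ih w.1 v
    exact Finite.of_equiv _ (walkSuccEquiv k n u v).symm

lemma step (k n : ℕ) (u v : ℕ × ℕ) :
    walkCount k (n+1) u v = ∑ w ∈ succs k u, walkCount k n w v := by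
  have hfin := walk_finite k
  unfold walkCount
  rw [Nat.card_congr (walkSuccEquiv k n u v)]
  have hw : ∀ w : {w : ℕ × ℕ // Dedge k u w}, Finite (Walk k n w.1 v) := fun w => hfin n w.1 v
  have hidx : Finite {w : ℕ × ℕ // Dedge k u w} := by
    have h : {w : ℕ × ℕ | Dedge k u w} ⊆ ↑(succs k u) := fun w hw => mem_succs.2 hw
    exact (Set.Finite.subset (succs k u).finite_toSet h).to_subtype
  classical
  have := Fintype.ofFinite {w : ℕ × ℕ // Dedge k u w}
  have inst2 : ∀ w : {w : ℕ × ℕ // Dedge k u w}, Fintype (Walk k n w.1 v) :=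
    fun w => Fintype.ofFinite _
  rw [Nat.card_eq_fintype_card, Fintype.card_sigma]
  rw [Finset.sum_subtype (succs k u) (fun w => mem_succs)]
  congr 1
  funext w
  rw [Nat.card_eq_fintype_card]

-- concrete successor sets in D_2
lemma succs00 : succs 2 (0,0) = {(0,1)} := by decide
lemma succs01 : succs 2 (0,1) = {(0,2),(1,0)} := by decide
lemma succs02 : succs 2 (0,2) = {(1,1)} := by decide
lemma succs10 : succs 2 (1,0) = {(0,0),(1,1)} := by decide
lemma succs11 : succs 2 (1,1) = {(0,1),(2,0)} := by decide
lemma succs20 : succs 2 (2,0) = {(1,0)} := by decide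

def g : ℕ → (ℕ × ℕ) → ℕ
  | 0, v => if v = (0,0) then 1 else 0
  | (n+1), v => ∑ w ∈ succs 2 v, g n w

lemma walkCount_eq_g : ∀ (n : ℕ) (v : ℕ × ℕ), walkCount 2 n v (0,0) = g n v := by
  intro n
  induction n with
  | zero =>
    intro v
    by_cases hv : v = (0,0)
    · subst hv
      show Nat.card _ = _
      have h1 : Nonempty (Walk 2 0 (0,0) (0,0)) :=
        ⟨⟨fun _ => (0,0), rfl, rfl, fun i => i.elim0⟩⟩
      have h2 : Subsingleton (Walk 2 0 ((0:ℕ),(0:ℕ)) ((0:ℕ),(0:ℕ))) := by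
        constructor
        intro a b
        apply Subtype.ext
        funext i
        have hi : i = 0 := Fin.ext (by simpa using Nat.lt_one_iff.mp i.isLt)
        rw [hi, a.2.1, b.2.1]
      rw [Nat.card_eq_one_iff_unique.2 ⟨h2, h1⟩]
      simp [g]
    · have h : IsEmpty (Walk 2 0 v (0,0)) := ⟨fun x => hv (x.2.1.symm.trans x.2.2.1)⟩
      show Nat.card _ = _
      rw [Nat.card_of_isEmpty]
      rw [show g 0 v = if v = (0,0) then 1 else 0 from rfl, if_neg hv]
  | succ n ih =>
    intro v
    rw [step]
    show _ = ∑ w ∈ succs 2 v, g n w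
    exact Finset.sum_congr rfl fun w _ => ih w

lemma g3 (n : ℕ) : g (n+1+1+1) (0,0) = 2 * g n (1,1) + g n (0,0) := by
  simp only [g, succs00, succs01, succs02, succs10, Finset.sum_singleton,
    Finset.sum_pair (by decide : ((0:ℕ),(2:ℕ)) ≠ (1,0)),
    Finset.sum_pair (by decide : ((0:ℕ),(0:ℕ)) ≠ (1,1))]
  omega

lemma g11 (n : ℕ) : g (n+1+1+1) (1,1) = 3 * g n (1,1) + 2 * g n (0,0) := by
  simp only [g, succs00, succs01, succs02, succs10, succs11, succs20, Finset.sum_singleton,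
    Finset.sum_pair (by decide : ((0:ℕ),(2:ℕ)) ≠ (1,0)),
    Finset.sum_pair (by decide : ((0:ℕ),(0:ℕ)) ≠ (1,1)),
    Finset.sum_pair (by decide : ((0:ℕ),(1:ℕ)) ≠ (2,0))]
  omega

lemma grec (n : ℕ) : g (n+6) (0,0) = 4 * g (n+3) (0,0) + g n (0,0) := by
  have e1 := g3 (n+3)
  have e2 := g11 n
  have e3 := g3 n
  have h1 : n+3+1+1+1 = n+6 := by omega
  have h2 : n+1+1+1 = n+3 := by omega
  rw [h1] at e1
  rw [h2] at e2 e3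
  omega

lemma wrec (n : ℕ) :
    walkCount 2 (n+6) (0,0) (0,0) = 4 * walkCount 2 (n+3) (0,0) (0,0) + walkCount 2 n (0,0) (0,0) := by
  rw [walkCount_eq_g, walkCount_eq_g, walkCount_eq_g]
  exact grec n

lemma w0 : walkCount 2 0 (0,0) (0,0) = 1 := by rw [walkCount_eq_g]; decide
lemma w1 : walkCount 2 1 (0,0) (0,0) = 0 := by rw [walkCount_eq_g]; decide
lemma w2 : walkCount 2 2 (0,0) (0,0) = 0 := by rw [walkCount_eq_g]; decide
lemma w3 : walkCount 2 3 (0,0) (0,0) = 1 := by rw [walkCount_eq_g]; decide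
lemma w4 : walkCount 2 4 (0,0) (0,0) = 0 := by rw [walkCount_eq_g]; decide
lemma w5 : walkCount 2 5 (0,0) (0,0) = 0 := by rw [walkCount_eq_g]; decide

theorem stmt5 :
    (1 - 4 * (PowerSeries.X : PowerSeries ℚ) ^ 3 - PowerSeries.X ^ 6) *
        PowerSeries.mk (fun n => (walkCount 2 n (0, 0) (0, 0) : ℚ)) =
      1 - 3 * PowerSeries.X ^ 3 := by
  set F : PowerSeries ℚ := PowerSeries.mk (fun n => (walkCount 2 n (0, 0) (0, 0) : ℚ)) with hF
  have h4 : (4 : PowerSeries ℚ) = PowerSeries.C (R := ℚ) 4 := by rw [map_ofNat]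
  have h3q : (3 : PowerSeries ℚ) = PowerSeries.C (R := ℚ) 3 := by rw [map_ofNat]
  have hL : (1 - 4 * (PowerSeries.X : PowerSeries ℚ) ^ 3 - PowerSeries.X ^ 6) * F = F - PowerSeries.C (R := ℚ) 4 * (PowerSeries.X ^ 3 * F) - PowerSeries.X ^ 6 * F := by
    rw [← h4]; ring
  rw [hL, h3q]
  ext n
  rw [map_sub, map_sub, map_sub, PowerSeries.coeff_C_mul, PowerSeries.coeff_C_mul, PowerSeries.coeff_X_pow_mul', PowerSeries.coeff_X_pow_mul',
    PowerSeries.coeff_one, PowerSeries.coeff_mk, PowerSeries.coeff_X_pow]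
  rcases Nat.lt_or_ge n 6 with hn | hn
  · interval_cases n <;>
      simp [hF, PowerSeries.coeff_mk, PowerSeries.constantCoeff_mk, w0, w1, w2, w3, w4, w5, ← Prod.mk_zero_zero] <;> norm_num
  · obtain ⟨m, rfl⟩ : ∃ m, n = m + 6 := ⟨n - 6, by omega⟩
    have hr := wrec m
    rw [if_pos (by omega : 3 ≤ m + 6), if_pos (by omega : 6 ≤ m + 6),
      if_neg (by omega : ¬ m + 6 = 0), PowerSeries.coeff_mk, PowerSeries.coeff_mk,
      show m + 6 - 3 = m + 3 from by omega, show m + 6 - 6 = m from by omega,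
      hr]
    rw [if_neg (by omega : ¬ m + 6 = 3)]
    push_cast
    ring
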